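/- Let p ∈ ℂ[τ] be a nonzero polynomial and u a distribution on ℝ with p(d/dt) u = 0 and u|_{(-∞,0)} = 0. Then u = 0. -/

import Mathlib

open Polynomial SchwartzMap
open scoped ContDiff

set_option maxHeartbeats 1000000


open Polynomial SchwartzMap
open scoped ContDiff

noncomputable section Stmt9Aux

namespace Stmt9

lemma htg_sub_const (h : ℝ) : Function.HasTemperateGrowth (fun x : ℝ => x - h) := by
  apply Function.HasTemperateGrowth.of_fderiv (k := 1) (C := 1 + |h|)
  · have : (fderiv ℝ (fun x : ℝ => x - h)) = fun _ : ℝ => ContinuousLinearMap.id ℝ ℝ := by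
      ext1 x
      rw [fderiv_sub_const, fderiv_id']
    rw [this]
    exact .const _
  · exact (differentiable_id.sub_const h)
  · intro x
    simp only [Real.norm_eq_abs, pow_one]
    have : |x - h| ≤ |x| + |h| := abs_sub x h
    nlinarith [abs_nonneg x, abs_nonneg h, abs_nonneg (x - h)]

lemma isometry_sub_const (h : ℝ) : Isometry (fun x : ℝ => x - h) := fun x y => by
  simp [edist_dist, dist_sub_right]

/-- Translation by `h` as a continuous linear map on Schwartz space. -/
def T (h : ℝ) : 𝓢(ℝ, ℂ) →L[ℝ] 𝓢(ℝ, ℂ) :=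
  compCLMOfAntilipschitz ℝ (htg_sub_const h) (isometry_sub_const h).antilipschitz

@[simp] lemma T_apply (h : ℝ) (φ : 𝓢(ℝ, ℂ)) (x : ℝ) : T h φ x = φ (x - h) := rfl

@[simp] lemma T_zero (φ : 𝓢(ℝ, ℂ)) : T 0 φ = φ := by
  ext x; simp

lemma derivCLM_T (h : ℝ) (φ : 𝓢(ℝ, ℂ)) :
    derivCLM ℝ ℂ (T h φ) = T h (derivCLM ℝ ℂ φ) := by
  ext x
  simp only [derivCLM_apply, T_apply]
  have : (⇑(T h φ) : ℝ → ℂ) = fun y => φ (y - h) := rfl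
  rw [this, deriv_comp_sub_const]

lemma derivCLM_pow_T (k : ℕ) (h : ℝ) (φ : 𝓢(ℝ, ℂ)) :
    ((derivCLM ℝ ℂ) ^ k) (T h φ) = T h (((derivCLM ℝ ℂ) ^ k) φ) := by
  induction k generalizing φ with
  | zero => simp
  | succ n ih =>
    rw [pow_succ, ContinuousLinearMap.mul_apply, ContinuousLinearMap.mul_apply,
      derivCLM_T, ih]

lemma coe_derivCLM_pow (k : ℕ) (φ : 𝓢(ℝ, ℂ)) :
    ⇑(((derivCLM ℝ ℂ) ^ k) φ) = iteratedDeriv k (⇑φ) := by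
  induction k generalizing φ with
  | zero => simp
  | succ n ih =>
    rw [pow_succ, ContinuousLinearMap.mul_apply, ih, iteratedDeriv_succ']
    congr 1

lemma abs_sub_le_of_mem_uIcc {a b y : ℝ} (hy : y ∈ Set.uIcc a b) : |y - a| ≤ |b - a| := by
  rcases Set.mem_uIcc.mp hy with ⟨h1, h2⟩ | ⟨h1, h2⟩ <;>
    · rw [abs_sub_le_iff]
      have hb := le_abs_self (b - a)
      have hb' := neg_le_abs (b - a)
      constructor <;> linarith

lemma taylor_bound (g : 𝓢(ℝ, ℂ)) (a b M : ℝ)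
    (hM : ∀ ξ ∈ Set.uIcc a b, ‖derivCLM ℝ ℂ (derivCLM ℝ ℂ g) ξ‖ ≤ M) :
    ‖g b - g a - (b - a) • (derivCLM ℝ ℂ g a)‖ ≤ M * |b - a| ^ 2 := by
  have hM0 : 0 ≤ M := le_trans (norm_nonneg _) (hM a Set.left_mem_uIcc)
  have hd1 : ∀ ξ ∈ Set.uIcc a b,
      HasDerivWithinAt (⇑(derivCLM ℝ ℂ g)) (derivCLM ℝ ℂ (derivCLM ℝ ℂ g) ξ) (Set.uIcc a b) ξ := by
    intro ξ _
    have := ((derivCLM ℝ ℂ g).differentiableAt (x := ξ)).hasDerivAt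
    rw [← derivCLM_apply (𝕜 := ℝ)] at this
    exact this.hasDerivWithinAt
  have step1 : ∀ y ∈ Set.uIcc a b,
      ‖derivCLM ℝ ℂ g y - derivCLM ℝ ℂ g a‖ ≤ M * |b - a| := by
    intro y hy
    have := (convex_uIcc a b).norm_image_sub_le_of_norm_hasDerivWithin_le hd1 hM
      Set.left_mem_uIcc hy
    refine this.trans ?_
    rw [Real.norm_eq_abs]
    exact mul_le_mul_of_nonneg_left (abs_sub_le_of_mem_uIcc hy) hM0
  set c : ℂ := derivCLM ℝ ℂ g a with hc
  have hd2 : ∀ y ∈ Set.uIcc a b,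
      HasDerivWithinAt (fun y => g y - (y - a) • c) (derivCLM ℝ ℂ g y - c) (Set.uIcc a b) y := by
    intro y _
    have h1 : HasDerivAt (⇑g) (derivCLM ℝ ℂ g y) y := by
      have := (g.differentiableAt (x := y)).hasDerivAt
      rwa [← derivCLM_apply (𝕜 := ℝ)] at this
    have h2 : HasDerivAt (fun y : ℝ => (y - a) • c) c y := by
      simpa using (((hasDerivAt_id y).sub_const a).smul_const c)
    exact (h1.sub h2).hasDerivWithinAt
  have step2 := (convex_uIcc a b).norm_image_sub_le_of_norm_hasDerivWithin_le hd2 step1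
    Set.left_mem_uIcc Set.right_mem_uIcc
  simp only [sub_self, zero_smul, sub_zero] at step2
  calc ‖g b - g a - (b - a) • c‖
      = ‖g b - (b - a) • c - g a‖ := by ring_nf
    _ ≤ M * |b - a| * ‖b - a‖ := step2
    _ = M * |b - a| ^ 2 := by rw [Real.norm_eq_abs]; ring

lemma key_seminorm (g : 𝓢(ℝ, ℂ)) (k m : ℕ) (h ε : ℝ) (hε : |ε| ≤ 1) :
    SchwartzMap.seminorm ℝ k m (T (h + ε) g - T h g + ε • T h (derivCLM ℝ ℂ g)) ≤
      ((|h| + 2) ^ k * (2 ^ k *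
        ((Finset.Iic (k, 0)).sup (fun m' => SchwartzMap.seminorm ℝ m'.1 m'.2)
          (((derivCLM ℝ ℂ) ^ (m + 2)) g)))) * ε ^ 2 := by
  set G := ((derivCLM ℝ ℂ) ^ m) g with hG
  set S := ((Finset.Iic (k, 0)).sup (fun m' => SchwartzMap.seminorm ℝ m'.1 m'.2)
      (((derivCLM ℝ ℂ) ^ (m + 2)) g)) with hS
  have hS0 : 0 ≤ S := apply_nonneg _ _
  have habs : (0:ℝ) ≤ |h| := abs_nonneg h
  have hDDG : derivCLM ℝ ℂ (derivCLM ℝ ℂ G) = ((derivCLM ℝ ℂ) ^ (m + 2)) g := by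
    rw [hG, pow_succ' (derivCLM ℝ ℂ) (m + 1), pow_succ' (derivCLM ℝ ℂ) m,
      ContinuousLinearMap.mul_apply, ContinuousLinearMap.mul_apply]
  have hDG : ((derivCLM ℝ ℂ) ^ m) (derivCLM ℝ ℂ g) = derivCLM ℝ ℂ G := by
    rw [hG, ← ContinuousLinearMap.mul_apply, ← pow_succ, pow_succ',
      ContinuousLinearMap.mul_apply]
  apply seminorm_le_bound' ℝ k m _ (by positivity)
  intro x
  set ψ := T (h + ε) g - T h g + ε • T h (derivCLM ℝ ℂ g) with hψdef
  have hψ : iteratedDeriv m ⇑ψ = ⇑(((derivCLM ℝ ℂ) ^ m) ψ) := (coe_derivCLM_pow m ψ).symm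
  have hDψ : ((derivCLM ℝ ℂ) ^ m) ψ = T (h + ε) G - T h G + ε • T h (derivCLM ℝ ℂ G) := by
    rw [hψdef, map_add, map_sub, map_smul, derivCLM_pow_T, derivCLM_pow_T, derivCLM_pow_T, hG,
      hDG]
  set a := x - h with ha
  set b := x - h - ε with hb
  have hba : b - a = -ε := by rw [ha, hb]; ring
  have hval : iteratedDeriv m (⇑ψ) x = G b - G a - (b - a) • (derivCLM ℝ ℂ G a) := by
    rw [hψ, hDψ]
    simp only [SchwartzMap.add_apply, SchwartzMap.sub_apply, SchwartzMap.smul_apply, T_apply]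
    rw [hba]
    have : x - (h + ε) = b := by rw [hb]; ring
    rw [this]
    module
  set M : ℝ := ((2:ℝ) ^ k * S) * (|h| + 2) ^ k / (1 + |x|) ^ k with hM
  have hxpos : (0:ℝ) < (1 + |x|) ^ k := by positivity
  have hMbound : ∀ ξ ∈ Set.uIcc a b, ‖derivCLM ℝ ℂ (derivCLM ℝ ℂ G) ξ‖ ≤ M := by
    intro ξ hξ
    have h1 : (1 + ‖ξ‖) ^ k * ‖iteratedFDeriv ℝ 0 (⇑(((derivCLM ℝ ℂ) ^ (m + 2)) g)) ξ‖ ≤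
        2 ^ k * S := by
      simpa [hS] using one_add_le_sup_seminorm_apply (𝕜 := ℝ) (m := (k, 0)) le_rfl le_rfl
        (((derivCLM ℝ ℂ) ^ (m + 2)) g) ξ
    rw [norm_iteratedFDeriv_zero, Real.norm_eq_abs] at h1
    have hξa : |ξ - a| ≤ |ε| := by
      have := abs_sub_le_of_mem_uIcc hξ
      rwa [hba, abs_neg] at this
    have h2 : 1 + |x| ≤ (|h| + 2) * (1 + |ξ|) := by
      have e1 : |x| ≤ |x - h| + |h| := by
        calc |x| = |(x - h) + h| := by ring_nf
          _ ≤ |x - h| + |h| := abs_add_le _ _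
      have e2 : |x - h| ≤ |ξ| + |ε| := by
        have : x - h - ξ = a - ξ := by rw [ha]
        have e3 : |x - h - ξ| ≤ |ε| := by rw [this, abs_sub_comm]; exact hξa
        have := abs_sub_abs_le_abs_sub (x - h) ξ
        linarith [this.trans e3]
      have hξ0 : (0:ℝ) ≤ |ξ| := abs_nonneg ξ
      nlinarith
    rw [hM, le_div_iff₀ hxpos]
    calc ‖derivCLM ℝ ℂ (derivCLM ℝ ℂ G) ξ‖ * (1 + |x|) ^ k
        ≤ ‖derivCLM ℝ ℂ (derivCLM ℝ ℂ G) ξ‖ * ((|h| + 2) ^ k * (1 + |ξ|) ^ k) := by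
          rw [← mul_pow]
          exact mul_le_mul_of_nonneg_left (pow_le_pow_left₀ (by positivity) h2 k) (norm_nonneg _)
      _ = (1 + |ξ|) ^ k * ‖(((derivCLM ℝ ℂ) ^ (m + 2)) g) ξ‖ * (|h| + 2) ^ k := by
          rw [hDDG]
          ring
      _ ≤ 2 ^ k * S * (|h| + 2) ^ k := by
          apply mul_le_mul_of_nonneg_right _ (by positivity)
          simpa [Real.norm_eq_abs] using h1
  have htay := taylor_bound G a b M hMbound
  have hbsq : |b - a| ^ 2 = ε ^ 2 := by rw [hba, abs_neg, sq_abs]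
  rw [hval]
  calc |x| ^ k * ‖G b - G a - (b - a) • (derivCLM ℝ ℂ G a)‖
      ≤ |x| ^ k * (M * ε ^ 2) := by
        apply mul_le_mul_of_nonneg_left _ (by positivity)
        rw [← hbsq]; exact htay
    _ = ((2:ℝ) ^ k * S) * (|h| + 2) ^ k * ε ^ 2 * (|x| ^ k / (1 + |x|) ^ k) := by
        rw [hM]; ring
    _ ≤ ((2:ℝ) ^ k * S) * (|h| + 2) ^ k * ε ^ 2 * 1 := by
        have hxk : |x| ^ k / (1 + |x|) ^ k ≤ 1 := by
          rw [div_le_one hxpos]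
          exact pow_le_pow_left₀ (abs_nonneg x) (by linarith [abs_nonneg x]) k
        exact mul_le_mul_of_nonneg_left hxk (by positivity)
    _ = ((|h| + 2) ^ k * (2 ^ k * S)) * ε ^ 2 := by ring

lemma u_bound (u : 𝓢(ℝ, ℂ) →L[ℝ] ℂ) :
    ∃ (s : Finset (ℕ × ℕ)) (C : ℝ), 0 ≤ C ∧
      ∀ f : 𝓢(ℝ, ℂ), ‖u f‖ ≤ C * (s.sup (schwartzSeminormFamily ℝ ℝ ℂ)) f := by
  set q : Seminorm ℝ 𝓢(ℝ, ℂ) := (normSeminorm ℝ ℂ).comp (u : 𝓢(ℝ, ℂ) →ₗ[ℝ] ℂ) with hq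
  have hqc : Continuous q := by
    have : ⇑q = fun f => ‖u f‖ := rfl
    rw [this]
    exact continuous_norm.comp u.continuous
  obtain ⟨s, C, hC, hle⟩ := Seminorm.bound_of_continuous (schwartz_withSeminorms ℝ ℝ ℂ) q hqc
  refine ⟨s, C, C.coe_nonneg, fun f => ?_⟩
  have := hle f
  simpa [hq, Seminorm.comp_apply, NNReal.smul_def] using this

lemma norm_u_T_bound (u : 𝓢(ℝ, ℂ) →L[ℝ] ℂ) (g : 𝓢(ℝ, ℂ)) (h : ℝ) :
    ∃ C : ℝ, 0 ≤ C ∧ ∀ ε : ℝ, |ε| ≤ 1 →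
      ‖u (T (h + ε) g - T h g + ε • T h (derivCLM ℝ ℂ g))‖ ≤ C * ε ^ 2 := by
  obtain ⟨s, C, hC0, hb⟩ := u_bound u
  set B : ℝ := ∑ i ∈ s, (|h| + 2) ^ i.1 * (2 ^ i.1 *
    ((Finset.Iic (i.1, 0)).sup (fun m' => SchwartzMap.seminorm ℝ m'.1 m'.2)
      (((derivCLM ℝ ℂ) ^ (i.2 + 2)) g))) with hB
  have hterm : ∀ i : ℕ × ℕ, 0 ≤ (|h| + 2) ^ i.1 * (2 ^ i.1 *
      ((Finset.Iic (i.1, 0)).sup (fun m' => SchwartzMap.seminorm ℝ m'.1 m'.2)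
        (((derivCLM ℝ ℂ) ^ (i.2 + 2)) g))) := by
    intro i
    have h0 : (0:ℝ) ≤ ((Finset.Iic (i.1, 0)).sup (fun m' : ℕ × ℕ =>
        SchwartzMap.seminorm ℝ m'.1 m'.2) : Seminorm ℝ 𝓢(ℝ, ℂ)) (((derivCLM ℝ ℂ) ^ (i.2 + 2)) g) :=
      apply_nonneg _ _
    positivity
  have hB0 : 0 ≤ B := Finset.sum_nonneg fun i _ => hterm i
  refine ⟨C * B, mul_nonneg hC0 hB0, fun ε hε => ?_⟩
  set ψ := T (h + ε) g - T h g + ε • T h (derivCLM ℝ ℂ g) with hψ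
  have hsup : (s.sup (schwartzSeminormFamily ℝ ℝ ℂ)) ψ ≤ B * ε ^ 2 := by
    apply Seminorm.finset_sup_apply_le (by positivity)
    intro i hi
    have hkey := key_seminorm g i.1 i.2 h ε hε
    refine hkey.trans ?_
    apply mul_le_mul_of_nonneg_right _ (sq_nonneg ε)
    exact Finset.single_le_sum (fun j _ => hterm j) hi
  calc ‖u ψ‖ ≤ C * (s.sup (schwartzSeminormFamily ℝ ℝ ℂ)) ψ := hb ψ
    _ ≤ C * (B * ε ^ 2) := mul_le_mul_of_nonneg_left hsup hC0
    _ = C * B * ε ^ 2 := by ring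

lemma hasDerivAt_uT (u : 𝓢(ℝ, ℂ) →L[ℝ] ℂ) (g : 𝓢(ℝ, ℂ)) (h : ℝ) :
    HasDerivAt (fun t => u (T t g)) (-(u (T h (derivCLM ℝ ℂ g)))) h := by
  rw [hasDerivAt_iff_isLittleO]
  obtain ⟨C, hC0, hb⟩ := norm_u_T_bound u g h
  have heq : (fun x' => u (T x' g) - u (T h g) - (x' - h) • (-(u (T h (derivCLM ℝ ℂ g)))))
      = fun x' => u (T (h + (x' - h)) g - T h g + (x' - h) • T h (derivCLM ℝ ℂ g)) := by
    funext x'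
    rw [map_add, map_sub, map_smul]
    have : h + (x' - h) = x' := by ring
    rw [this]
    simp only [smul_neg, smul_eq_mul]
    ring
  rw [heq]
  have h2 : (fun x' => u (T (h + (x' - h)) g - T h g + (x' - h) • T h (derivCLM ℝ ℂ g)))
      =O[nhds h] fun x' => (x' - h) ^ 2 := by
    rw [Asymptotics.isBigO_iff]
    refine ⟨C, ?_⟩
    filter_upwards [Metric.closedBall_mem_nhds h one_pos] with x' hx'
    have hd : |x' - h| ≤ 1 := by
      rw [Metric.mem_closedBall, Real.dist_eq] at hx'
      exact hx'
    calc ‖u (T (h + (x' - h)) g - T h g + (x' - h) • T h (derivCLM ℝ ℂ g))‖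
        ≤ C * (x' - h) ^ 2 := hb (x' - h) hd
      _ = C * ‖(x' - h) ^ 2‖ := by
          rw [Real.norm_eq_abs, abs_of_nonneg (sq_nonneg _)]
  have h1 : (fun x' : ℝ => (x' - h) ^ 2) =o[nhds h] fun x' => x' - h := by
    have ha : (fun x' : ℝ => x' - h) =o[nhds h] (fun _ => (1 : ℝ)) := by
      rw [Asymptotics.isLittleO_one_iff]
      have : Filter.Tendsto (fun x' : ℝ => x' - h) (nhds h) (nhds (h - h)) :=
        (continuous_id.sub continuous_const).tendsto h
      simpa using this
    have hbb : (fun x' : ℝ => x' - h) =O[nhds h] (fun x' => x' - h) :=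
      Asymptotics.isBigO_refl _ _
    have := ha.mul_isBigO hbb
    simpa [pow_two] using this
  exact h2.trans_isLittleO h1

lemma D_pow_succ (k : ℕ) (ψ : 𝓢(ℝ, ℂ)) :
    derivCLM ℝ ℂ (((derivCLM ℝ ℂ) ^ k) ψ) = ((derivCLM ℝ ℂ) ^ (k + 1)) ψ := by
  rw [pow_succ', ContinuousLinearMap.mul_apply]

lemma tsupport_derivCLM_pow_subset (ψ : 𝓢(ℝ, ℂ)) (k : ℕ) :
    tsupport ⇑(((derivCLM ℝ ℂ) ^ k) ψ) ⊆ tsupport ⇑ψ := by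
  rw [coe_derivCLM_pow]
  induction k with
  | zero => rw [iteratedDeriv_zero]
  | succ m ih =>
    rw [iteratedDeriv_succ]
    exact (closure_minimal support_deriv_subset (isClosed_tsupport _)).trans ih

lemma tsupport_T_subset {ψ : 𝓢(ℝ, ℂ)} {R : ℝ} (hR : tsupport ⇑ψ ⊆ Set.Icc (-R) R) (h : ℝ) :
    tsupport ⇑(T h ψ) ⊆ Set.Icc (h - R) (h + R) := by
  apply closure_minimal _ isClosed_Icc
  intro x hx
  have hne : ψ (x - h) ≠ 0 := hx
  have hm : x - h ∈ tsupport ⇑ψ := subset_tsupport _ hne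
  have := hR hm
  exact ⟨by linarith [this.1], by linarith [this.2]⟩

lemma u_compact (p : ℂ[X]) (hp : p ≠ 0) (u : 𝓢(ℝ, ℂ) →L[ℝ] ℂ)
    (hode : ∀ φ : 𝓢(ℝ, ℂ),
      (p.sum fun k a => a * (-1 : ℂ) ^ k * u (((SchwartzMap.derivCLM ℝ ℂ) ^ k) φ)) = 0)
    (hsupp : ∀ φ : 𝓢(ℝ, ℂ), tsupport (φ : ℝ → ℂ) ⊆ Set.Iio 0 → u φ = 0)
    (R : ℝ) (hR0 : 0 ≤ R) (ψ : 𝓢(ℝ, ℂ)) (hψ : tsupport ⇑ψ ⊆ Set.Icc (-R) R) :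
    u ψ = 0 := by
  set n := p.natDegree with hn
  have han : p.coeff n ≠ 0 := by
    rw [hn, ← Polynomial.leadingCoeff]
    exact Polynomial.leadingCoeff_ne_zero.mpr hp
  have hcn : (p.coeff n * (-1 : ℂ) ^ n) ≠ 0 :=
    mul_ne_zero han (pow_ne_zero _ (neg_ne_zero.mpr one_ne_zero))
  have hode'' : ∀ t : ℝ, ∑ k ∈ Finset.range (n + 1),
      p.coeff k * (-1 : ℂ) ^ k * u (T t (((derivCLM ℝ ℂ) ^ k) ψ)) = 0 := by
    intro t
    have h0 := hode (T t ψ)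
    have hsum := Polynomial.sum_over_range (p := p)
      (f := fun k a => a * (-1 : ℂ) ^ k * u (((derivCLM ℝ ℂ) ^ k) (T t ψ)))
      (by intro m; simp)
    rw [hsum] at h0
    simpa only [derivCLM_pow_T] using h0
  rcases Nat.eq_zero_or_pos n with hn0 | hnpos
  · have h0 := hode'' 0
    rw [hn0] at h0
    simp only [zero_add, Finset.sum_range_one, pow_zero, ContinuousLinearMap.one_apply, mul_one,
      T_zero] at h0
    have : p.coeff n ≠ 0 := han
    rw [hn0] at this
    rcases mul_eq_zero.mp h0 with h | h
    · exact absurd h this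
    · exact h
  -- main case
  set c : ℂ := (p.coeff n * (-1 : ℂ) ^ n)⁻¹ with hc
  set F : ℝ → (Fin n → ℂ) := fun t i => u (T t (((derivCLM ℝ ℂ) ^ (i : ℕ)) ψ)) with hF
  set A : (Fin n → ℂ) →ₗ[ℂ] (Fin n → ℂ) := LinearMap.pi (fun i =>
    if h : (i : ℕ) + 1 < n then -(LinearMap.proj (⟨(i : ℕ) + 1, h⟩ : Fin n))
    else c • (∑ k : Fin n,
      (p.coeff (k : ℕ) * (-1 : ℂ) ^ (k : ℕ)) • (LinearMap.proj k : (Fin n → ℂ) →ₗ[ℂ] ℂ)))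
    with hA
  set Acl : (Fin n → ℂ) →L[ℂ] (Fin n → ℂ) := LinearMap.toContinuousLinearMap A with hAcl
  have hlast : ∀ t : ℝ, -(u (T t (((derivCLM ℝ ℂ) ^ n) ψ))) =
      c * ∑ k : Fin n, (p.coeff (k : ℕ) * (-1 : ℂ) ^ (k : ℕ)) *
        u (T t (((derivCLM ℝ ℂ) ^ (k : ℕ)) ψ)) := by
    intro t
    have h0 := hode'' t
    rw [Finset.sum_range_succ, Finset.sum_range] at h0
    have h1 : ∑ k : Fin n, p.coeff (k : ℕ) * (-1 : ℂ) ^ (k : ℕ) *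
        u (T t (((derivCLM ℝ ℂ) ^ (k : ℕ)) ψ)) =
        -(p.coeff n * (-1 : ℂ) ^ n * u (T t (((derivCLM ℝ ℂ) ^ n) ψ))) := by
      linear_combination h0
    rw [h1, hc]
    field_simp
  have hDeriv : ∀ t : ℝ, HasDerivAt F (Acl (F t)) t := by
    intro t
    rw [hasDerivAt_pi]
    intro i
    have hcomp : HasDerivAt (fun s : ℝ => F s i)
        (-(u (T t (((derivCLM ℝ ℂ) ^ ((i : ℕ) + 1)) ψ)))) t := by
      have := hasDerivAt_uT u (((derivCLM ℝ ℂ) ^ (i : ℕ)) ψ) t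
      rw [D_pow_succ] at this
      exact this
    have hval : Acl (F t) i = -(u (T t (((derivCLM ℝ ℂ) ^ ((i : ℕ) + 1)) ψ))) := by
      rw [hAcl, LinearMap.coe_toContinuousLinearMap', hA, LinearMap.pi_apply]
      by_cases h : (i : ℕ) + 1 < n
      · rw [dif_pos h]
        rfl
      · rw [dif_neg h]
        have hin : (i : ℕ) + 1 = n := by
          have := i.isLt
          omega
        rw [hin, hlast t]
        simp only [LinearMap.smul_apply, LinearMap.sum_apply, LinearMap.proj_apply,
          smul_eq_mul]
        rfl
    rw [hval]
    exact hcomp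
  -- endpoint
  set t₀ : ℝ := -(R + 1) with ht₀
  have hF0 : F t₀ = 0 := by
    funext i
    apply hsupp
    have h1 : tsupport ⇑(((derivCLM ℝ ℂ) ^ (i : ℕ)) ψ) ⊆ Set.Icc (-R) R :=
      (tsupport_derivCLM_pow_subset ψ (i : ℕ)).trans hψ
    refine (tsupport_T_subset h1 t₀).trans ?_
    intro x hx
    have h2 := hx.2
    rw [ht₀] at h2
    simp only [Set.mem_Iio]
    linarith
  have hFcont : ContinuousOn F (Set.Icc t₀ 0) :=
    (continuous_iff_continuousAt.mpr fun t => (hDeriv t).continuousAt).continuousOn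
  have hlip : ∀ t : ℝ, LipschitzOnWith ‖Acl‖₊ (fun y => Acl y) Set.univ := by
    intro t
    exact Acl.lipschitz.lipschitzOnWith
  have hzero : Set.EqOn F (fun _ => (0 : Fin n → ℂ)) (Set.Icc t₀ 0) := by
    apply ODE_solution_unique_of_mem_Icc_right
      (v := fun _ y => Acl y) (s := fun _ => Set.univ) (K := ‖Acl‖₊)
      (hv := fun t _ => hlip t)
      (hf := hFcont)
      (hf' := fun t _ => (hDeriv t).hasDerivWithinAt)
      (hfs := fun _ _ => trivial)
      (hg := continuousOn_const)
      (hg' := fun t _ => by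
        simpa using (hasDerivWithinAt_const t (Set.Ici t) (0 : Fin n → ℂ)))
      (hgs := fun _ _ => trivial)
      (ha := by rw [hF0])
  have h00 : F 0 = 0 := hzero ⟨by rw [ht₀]; linarith, le_refl 0⟩
  have hfin := congrFun h00 ⟨0, hnpos⟩
  simpa only [hF, Nat.cast_zero, pow_zero, ContinuousLinearMap.one_apply, T_zero,
    Pi.zero_apply] using hfin

def bump : ContDiffBump (0 : ℝ) := ⟨1, 2, one_pos, one_lt_two⟩

lemma bump_smooth : ContDiff ℝ ∞ (⇑bump) := bump.contDiff

lemma natCast_le_inf (l : ℕ) : (l : WithTop ℕ∞) ≤ ∞ := by exact_mod_cast le_top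

lemma bump_iFD_bound (l : ℕ) :
    ∃ M : ℝ, 0 ≤ M ∧ ∀ y : ℝ, ‖iteratedFDeriv ℝ l (⇑bump) y‖ ≤ M := by
  obtain ⟨M, hM⟩ := (bump.hasCompactSupport.iteratedFDeriv l).exists_bound_of_continuous
    (bump_smooth.continuous_iteratedFDeriv (natCast_le_inf l))
  exact ⟨max M 0, le_max_right _ _, fun y => (hM y).trans (le_max_left _ _)⟩

lemma cutoff_contDiff (c : ℝ) : ContDiff ℝ ∞ (fun x : ℝ => bump (c * x)) :=
  bump_smooth.comp (contDiff_const.mul contDiff_id)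

lemma cutoff_iFD_bound (l : ℕ) : ∃ M : ℝ, 0 ≤ M ∧ ∀ c : ℝ, 0 < c → c ≤ 1 →
    ∀ x : ℝ, ‖iteratedFDeriv ℝ l (fun x : ℝ => bump (c * x)) x‖ ≤ M := by
  obtain ⟨M, hM0, hM⟩ := bump_iFD_bound l
  refine ⟨M, hM0, fun c hc0 hc1 x => ?_⟩
  rw [norm_iteratedFDeriv_eq_norm_iteratedDeriv]
  have hscale := iteratedDeriv_comp_const_mul (n := l)
    (bump_smooth.of_le (natCast_le_inf l)) c (f := ⇑bump)
  rw [congrFun hscale x, norm_mul, norm_pow]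
  have h1 : ‖c‖ ^ l ≤ 1 := pow_le_one₀ (norm_nonneg c) (by rwa [Real.norm_eq_abs, abs_of_pos hc0])
  have h2 : ‖iteratedDeriv l (⇑bump) (c * x)‖ ≤ M := by
    rw [← norm_iteratedFDeriv_eq_norm_iteratedDeriv]
    exact hM (c * x)
  calc ‖c‖ ^ l * ‖iteratedDeriv l (⇑bump) (c * x)‖ ≤ 1 * M := by
        exact mul_le_mul h1 h2 (norm_nonneg _) one_pos.le
    _ = M := one_mul M

lemma htg_cutoff {c : ℝ} (hc0 : 0 < c) (hc1 : c ≤ 1) :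
    Function.HasTemperateGrowth (fun x : ℝ => bump (c * x)) := by
  refine ⟨cutoff_contDiff c, fun l => ?_⟩
  obtain ⟨M, hM0, hM⟩ := cutoff_iFD_bound l
  exact ⟨0, M, fun x => by simpa using hM c hc0 hc1 x⟩

/-- Multiplication by a real function of temperate growth. -/
def mulCLM (g : ℝ → ℝ) (hg : g.HasTemperateGrowth) : 𝓢(ℝ, ℂ) →L[ℝ] 𝓢(ℝ, ℂ) :=
  bilinLeftCLM ((ContinuousLinearMap.lsmul ℝ ℝ : ℝ →L[ℝ] ℂ →L[ℝ] ℂ).flip) hg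

lemma mulCLM_apply (g : ℝ → ℝ) (hg : g.HasTemperateGrowth) (f : 𝓢(ℝ, ℂ)) (x : ℝ) :
    mulCLM g hg f x = g x • f x := rfl

lemma iFD_zero_local {f : ℝ → ℂ} {x : ℝ} (h : f =ᶠ[nhds x] (fun _ => 0)) (n : ℕ) :
    iteratedFDeriv ℝ n f x = 0 := by
  have heq : iteratedFDeriv ℝ n f x = iteratedFDeriv ℝ n (fun _ : ℝ => (0 : ℂ)) x := by
    rw [← iteratedFDerivWithin_univ, ← iteratedFDerivWithin_univ]
    apply Filter.EventuallyEq.iteratedFDerivWithin_eq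
    · rw [nhdsWithin_univ]; exact h
    · exact h.self_of_nhds
  rw [heq, iteratedFDeriv_zero_fun, Pi.zero_apply]

lemma cutoff_seminorm (φ : 𝓢(ℝ, ℂ)) (k m : ℕ) : ∃ C : ℝ, 0 ≤ C ∧
    ∀ (c : ℝ) (hc0 : 0 < c) (hc1 : c ≤ 1),
      SchwartzMap.seminorm ℝ k m
        (φ - mulCLM (fun x => bump (c * x)) (htg_cutoff hc0 hc1) φ) ≤ C * c := by
  have hMex : ∀ j : ℕ, ∃ M : ℝ, 0 ≤ M ∧ ∀ c : ℝ, 0 < c → c ≤ 1 →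
      ∀ x : ℝ, ‖iteratedFDeriv ℝ j (fun x : ℝ => bump (c * x)) x‖ ≤ M := cutoff_iFD_bound
  choose M hM0 hM using hMex
  set C : ℝ := ∑ j ∈ Finset.range (m + 1),
    (m.choose j : ℝ) * (1 + M j) * SchwartzMap.seminorm ℝ (k + 1) (m - j) φ with hC
  have hC0 : 0 ≤ C := by
    apply Finset.sum_nonneg
    intro j _
    have h00 : (0:ℝ) ≤ SchwartzMap.seminorm ℝ (k + 1) (m - j) φ := apply_nonneg _ _
    have := hM0 j
    positivity
  refine ⟨C, hC0, fun c hc0 hc1 => ?_⟩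
  set ψ := φ - mulCLM (fun x => bump (c * x)) (htg_cutoff hc0 hc1) φ with hψ
  have hfun : ⇑ψ = fun y => (1 - bump (c * y)) • φ y := by
    funext y
    rw [hψ, SchwartzMap.sub_apply, mulCLM_apply, sub_smul, one_smul]
  apply seminorm_le_bound ℝ k m _ (by positivity)
  intro x
  by_cases hx : |c * x| < 1
  · have hev : ⇑ψ =ᶠ[nhds x] (fun _ => 0) := by
      have hcont : Filter.Tendsto (fun y : ℝ => |c * y|) (nhds x) (nhds |c * x|) :=
        ((continuous_const.mul continuous_id).abs).tendsto x
      filter_upwards [hcont.eventually_lt_const hx] with y hy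
      rw [hfun]
      have hone : bump (c * y) = 1 := by
        apply ContDiffBump.one_of_mem_closedBall
        rw [Metric.mem_closedBall, Real.dist_eq, sub_zero]
        · exact hy.le
      simp [hone]
    rw [iFD_zero_local hev m]
    simp only [norm_zero, mul_zero]
    positivity
  · push_neg at hx
    have hx1 : (1 : ℝ) ≤ |x| := by
      have : |c * x| ≤ |x| := by
        rw [abs_mul]
        calc |c| * |x| ≤ 1 * |x| :=
          mul_le_mul_of_nonneg_right (by rwa [abs_of_pos hc0]) (abs_nonneg x)
        _ = |x| := one_mul _
      linarith
    have hxpos : (0 : ℝ) < |x| := lt_of_lt_of_le one_pos hx1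
    have hcx : 1 / |x| ≤ c := by
      rw [div_le_iff₀ hxpos]
      calc (1 : ℝ) ≤ |c * x| := hx
        _ = c * |x| := by rw [abs_mul, abs_of_pos hc0]
    have hprod : ‖iteratedFDeriv ℝ m (⇑ψ) x‖ ≤ ∑ j ∈ Finset.range (m + 1),
        (m.choose j : ℝ) * ‖iteratedFDeriv ℝ j (fun y : ℝ => 1 - bump (c * y)) x‖ *
          ‖iteratedFDeriv ℝ (m - j) (⇑φ) x‖ := by
      rw [hfun]
      exact norm_iteratedFDeriv_smul_le (𝕜 := ℝ)
        (contDiff_const.sub ((cutoff_contDiff c).of_le (natCast_le_inf m)))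
        ((φ.smooth ⊤).of_le (natCast_le_inf m)) x le_rfl
    have hBj : ∀ j : ℕ, ‖iteratedFDeriv ℝ j (fun y : ℝ => 1 - bump (c * y)) x‖ ≤ 1 + M j := by
      intro j
      rcases Nat.eq_zero_or_pos j with hj0 | hjpos
      · subst hj0
        rw [norm_iteratedFDeriv_zero]
        have h1 := bump.nonneg' (c * x)
        have h2 := bump.le_one (x := c * x)
        rw [Real.norm_eq_abs, abs_of_nonneg (by linarith)]
        linarith [hM0 0]
      · have hsplit : iteratedFDeriv ℝ j (fun y : ℝ => 1 - bump (c * y)) x =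
            iteratedFDeriv ℝ j (fun _ : ℝ => (1 : ℝ)) x -
              iteratedFDeriv ℝ j (fun y : ℝ => bump (c * y)) x := by
          have heq1 : (fun y : ℝ => 1 - bump (c * y)) =
              (fun _ : ℝ => (1 : ℝ)) + (fun y : ℝ => -(bump (c * y))) := by
            funext y
            simp only [Pi.add_apply, Pi.neg_apply]
            ring
          rw [heq1, iteratedFDeriv_add_apply contDiff_const.contDiffAt
            (((cutoff_contDiff c).of_le (natCast_le_inf j)).neg).contDiffAt]
          have hneg : (fun y : ℝ => -(bump (c * y))) = -(fun y : ℝ => bump (c * y)) := rfl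
          rw [hneg, iteratedFDeriv_neg_apply]
          abel
        rw [hsplit, iteratedFDeriv_const_of_ne (Nat.pos_iff_ne_zero.mp hjpos) (1 : ℝ)]
        rw [Pi.zero_apply, zero_sub, norm_neg]
        linarith [hM j c hc0 hc1 x]
    calc |x| ^ k * ‖iteratedFDeriv ℝ m (⇑ψ) x‖
        ≤ |x| ^ k * ∑ j ∈ Finset.range (m + 1),
          (m.choose j : ℝ) * ‖iteratedFDeriv ℝ j (fun y : ℝ => 1 - bump (c * y)) x‖ *
            ‖iteratedFDeriv ℝ (m - j) (⇑φ) x‖ := by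
          apply mul_le_mul_of_nonneg_left hprod (by positivity)
      _ = ∑ j ∈ Finset.range (m + 1),
          (m.choose j : ℝ) * ‖iteratedFDeriv ℝ j (fun y : ℝ => 1 - bump (c * y)) x‖ *
            (|x| ^ k * ‖iteratedFDeriv ℝ (m - j) (⇑φ) x‖) := by
          rw [Finset.mul_sum]
          apply Finset.sum_congr rfl
          intro j _
          ring
      _ ≤ ∑ j ∈ Finset.range (m + 1),
          (m.choose j : ℝ) * (1 + M j) *
            (SchwartzMap.seminorm ℝ (k + 1) (m - j) φ * c) := by
          apply Finset.sum_le_sum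
          intro j _
          have hc_x : 1 ≤ c * |x| := by
            rw [div_le_iff₀ hxpos] at hcx
            linarith
          have hterm1 : |x| ^ k * ‖iteratedFDeriv ℝ (m - j) (⇑φ) x‖ ≤
              SchwartzMap.seminorm ℝ (k + 1) (m - j) φ * c := by
            have hle := le_seminorm ℝ (k + 1) (m - j) φ x
            rw [Real.norm_eq_abs] at hle
            have hrw : |x| ^ k * ‖iteratedFDeriv ℝ (m - j) (⇑φ) x‖ =
                (|x| ^ (k + 1) * ‖iteratedFDeriv ℝ (m - j) (⇑φ) x‖) / |x| := by
              field_simp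
              ring
            rw [hrw]
            calc (|x| ^ (k + 1) * ‖iteratedFDeriv ℝ (m - j) (⇑φ) x‖) / |x|
                ≤ SchwartzMap.seminorm ℝ (k + 1) (m - j) φ / |x| := by gcongr
              _ ≤ SchwartzMap.seminorm ℝ (k + 1) (m - j) φ * c := by
                  rw [div_le_iff₀ hxpos]
                  calc SchwartzMap.seminorm ℝ (k + 1) (m - j) φ
                      = SchwartzMap.seminorm ℝ (k + 1) (m - j) φ * 1 := (mul_one _).symm
                    _ ≤ SchwartzMap.seminorm ℝ (k + 1) (m - j) φ * (c * |x|) := by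
                        apply mul_le_mul_of_nonneg_left hc_x (apply_nonneg _ _)
                    _ = SchwartzMap.seminorm ℝ (k + 1) (m - j) φ * c * |x| := by ring
          apply mul_le_mul
          · exact mul_le_mul_of_nonneg_left (hBj j) (by positivity)
          · exact hterm1
          · positivity
          · have := hM0 j
            positivity
      _ = C * c := by rw [hC, Finset.sum_mul]; apply Finset.sum_congr rfl; intro j _; ring

end Stmt9

end Stmt9Aux


open Stmt9 in
/-- if `p ∈ ℂ[τ]` is a nonzero polynomial and `u` is a distribution on `ℝ`
with `p(d/dt)u = 0` (in the distributional sense, i.e. tested by duality with the sign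
`(-1)^k` for the `k`-th derivative) and `u` vanishes on `(-∞,0)` (i.e. `⟨u,φ⟩ = 0` for
every test function `φ` with support contained in `(-∞,0)`), then `u = 0`. -/
theorem stmt9 (p : ℂ[X]) (hp : p ≠ 0) (u : 𝓢(ℝ, ℂ) →L[ℝ] ℂ)
    (hode : ∀ φ : 𝓢(ℝ, ℂ),
      (p.sum fun k a => a * (-1 : ℂ) ^ k * u (((SchwartzMap.derivCLM ℝ ℂ) ^ k) φ)) = 0)
    (hsupp : ∀ φ : 𝓢(ℝ, ℂ), tsupport (φ : ℝ → ℂ) ⊆ Set.Iio 0 → u φ = 0) :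
    u = 0 := by
  ext φ
  rw [ContinuousLinearMap.zero_apply]
  set c : ℕ → ℝ := fun N => ((N : ℝ) + 1)⁻¹ with hcdef
  have hc0 : ∀ N : ℕ, 0 < c N := fun N => by positivity
  have hc1 : ∀ N : ℕ, c N ≤ 1 := by
    intro N
    rw [hcdef]
    simp only
    rw [inv_le_one_iff₀]
    right
    have : (0:ℝ) ≤ (N:ℝ) := Nat.cast_nonneg N
    linarith
  set φN : ℕ → 𝓢(ℝ, ℂ) := fun N =>
    mulCLM (fun x => bump (c N * x)) (htg_cutoff (hc0 N) (hc1 N)) φ with hφN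
  have hzero : ∀ N : ℕ, u (φN N) = 0 := by
    intro N
    have hb : (0:ℝ) < (N : ℝ) + 1 := by positivity
    apply u_compact p hp u hode hsupp (2 * ((N : ℝ) + 1)) (by positivity)
    apply closure_minimal _ isClosed_Icc
    intro x hx
    have hne : bump (c N * x) • φ x ≠ 0 := hx
    have hbne : bump (c N * x) ≠ 0 := by
      intro h0
      rw [h0, zero_smul] at hne
      exact hne rfl
    have hmem : c N * x ∈ Function.support ⇑bump := hbne
    rw [bump.support_eq] at hmem
    have habs : |c N * x| < 2 := by
      rw [Metric.mem_ball, Real.dist_eq, sub_zero] at hmem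
      exact hmem
    have h2 : c N * |x| < 2 := by rwa [abs_mul, abs_of_pos (hc0 N)] at habs
    rw [hcdef] at h2
    have h3 := mul_lt_mul_of_pos_left h2 hb
    rw [← mul_assoc, mul_inv_cancel₀ (ne_of_gt hb), one_mul] at h3
    constructor <;> [linarith [neg_abs_le x]; linarith [le_abs_self x]]
  have htendφ : Filter.Tendsto φN Filter.atTop (nhds φ) := by
    rw [(schwartz_withSeminorms ℝ ℝ ℂ).tendsto_nhds]
    rintro ⟨k, m⟩
    obtain ⟨C, hC0, hC⟩ := cutoff_seminorm φ k m
    intro ε hε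
    have hlim : Filter.Tendsto (fun N : ℕ => C * c N) Filter.atTop (nhds 0) := by
      have h1 := tendsto_one_div_add_atTop_nhds_zero_nat.const_mul C
      rw [mul_zero] at h1
      refine h1.congr fun N => ?_
      rw [hcdef, one_div]
    filter_upwards [hlim.eventually_lt_const hε] with N hN
    have hbound : schwartzSeminormFamily ℝ ℝ ℂ (k, m) (φN N - φ) ≤ C * c N := by
      rw [schwartzSeminormFamily_apply, ← neg_sub, map_neg_eq_map]
      exact hC (c N) (hc0 N) (hc1 N)
    exact lt_of_le_of_lt hbound hN
  have htend : Filter.Tendsto (fun N => u (φN N)) Filter.atTop (nhds (u φ)) :=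
    (u.continuous.tendsto φ).comp htendφ
  rw [show (fun N => u (φN N)) = fun _ : ℕ => (0 : ℂ) from funext hzero] at htend
  exact (tendsto_nhds_unique htend tendsto_const_nhds)
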